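/- Let n ≥ 2, let T be a partition of {1,…,n} into k blocks, and let c ∈ [−1/(k−1), 1]. Then the n×n matrix M with M_{ij} = 1 if i,j lie in the same block of T and M_{ij} = c otherwise, is positive semidefinite. -/

import Mathlib

theorem partition_pattern_matrix_posSemidef (n k : ℕ) (hn : 2 ≤ n)
    (π : Fin n → Fin k) (hπ : Function.Surjective π)
    (c : ℝ) (hc : c ∈ Set.Icc (-1 / (k - 1) : ℝ) 1) :
    (Matrix.of fun i j : Fin n => if π i = π j then (1 : ℝ) else c).PosSemidef := by
  obtain ⟨hc1, hc2⟩ := hc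
  have hk : 1 ≤ k := by
    have : Nonempty (Fin k) := ⟨π ⟨0, by omega⟩⟩
    exact Fin.pos_iff_nonempty.mpr this
  rw [Matrix.posSemidef_iff_dotProduct_mulVec]
  constructor
  · ext i j
    simp only [Matrix.conjTranspose_apply, Matrix.of_apply, star_trivial]
    by_cases h : π i = π j
    · rw [if_pos h, if_pos h.symm]
    · rw [if_neg h, if_neg (fun hh => h hh.symm)]
  · intro x
    set s : Fin k → ℝ := fun b => ∑ i ∈ Finset.univ.filter (fun i => π i = b), x i with hs
    have key : dotProduct (star x)
        ((Matrix.of fun i j : Fin n => if π i = π j then (1 : ℝ) else c).mulVec x)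
        = c * (∑ b, s b) ^ 2 + (1 - c) * ∑ b, (s b) ^ 2 := by
      have hS : (∑ b, s b) = ∑ i, x i :=
        Finset.sum_fiberwise_of_maps_to (fun i _ => Finset.mem_univ (π i)) x
      simp only [dotProduct, Matrix.mulVec, dotProduct, Matrix.of_apply,
        star_trivial]
      have : ∀ i, ∑ j, (if π i = π j then (1:ℝ) else c) * x j
          = c * (∑ j, x j) + (1 - c) * s (π i) := by
        intro i
        simp only [hs]
        rw [Finset.sum_filter]
        rw [Finset.mul_sum, Finset.mul_sum, ← Finset.sum_add_distrib]
        apply Finset.sum_congr rfl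
        intro j _
        by_cases h : π i = π j
        · rw [if_pos h, if_pos h.symm]; ring
        · rw [if_neg h, if_neg (fun hh => h hh.symm)]; ring
      simp only [this, mul_add]
      rw [Finset.sum_add_distrib]
      congr 1
      · rw [← Finset.sum_mul, ← hS]; ring
      · have : ∑ i, x i * ((1 - c) * s (π i)) = (1-c) * ∑ i, x i * s (π i) := by
          rw [Finset.mul_sum]; apply Finset.sum_congr rfl; intro i _; ring
        rw [this]
        congr 1
        rw [← Finset.sum_fiberwise_of_maps_to (g := π) (fun i _ => Finset.mem_univ (π i))
          (fun i => x i * s (π i))]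
        apply Finset.sum_congr rfl
        intro b _
        have hfix : ∀ i ∈ Finset.univ.filter (fun i => π i = b), x i * s (π i) = x i * s b := by
          intro i hi
          simp only [Finset.mem_filter] at hi
          rw [hi.2]
        rw [Finset.sum_congr rfl hfix, ← Finset.sum_mul]
        simp only [hs, sq]
    rw [key]
    rcases le_or_gt 0 c with h0 | h0
    · have h1 : 0 ≤ ∑ b, (s b)^2 := Finset.sum_nonneg fun b _ => sq_nonneg _
      nlinarith [mul_nonneg h0 (sq_nonneg (∑ b, s b)),
        mul_nonneg (show (0:ℝ) ≤ 1 - c by linarith) h1]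
    · have hCS : (∑ b, s b) ^ 2 ≤ (k : ℝ) * ∑ b, (s b) ^ 2 := by
        simpa using sq_sum_le_card_mul_sum_sq (s := Finset.univ) (f := s)
      have h1 : 0 ≤ ∑ b, (s b)^2 := Finset.sum_nonneg fun b _ => sq_nonneg _
      have h2 : c * ((k:ℝ) * ∑ b, (s b)^2) ≤ c * (∑ b, s b)^2 :=
        mul_le_mul_of_nonpos_left hCS h0.le
      have hk2 : 2 ≤ k := by
        by_contra h
        have hk1 : k = 1 := by omega
        subst hk1
        norm_num at hc1
        linarith
      have hkr : (0:ℝ) < (k:ℝ) - 1 := by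
        have : (2:ℝ) ≤ k := by exact_mod_cast hk2
        linarith
      have hc1' : (-1:ℝ) ≤ c * ((k:ℝ) - 1) := (div_le_iff₀ hkr).mp hc1
      nlinarith [h1, h2, mul_nonneg (show (0:ℝ) ≤ 1 + c*((k:ℝ)-1) by linarith) h1]
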